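/- Let p be a real polynomial of degree k ≥ 2, q its associated symmetric polynomial, and G(x,y) = (y, (y·q(x,y) − p(y))/q(x,y)) the secant map in its extended form. At every point (x,y) ∈ ℝ² with q(x,y) ≠ 0, G is differentiable and its total derivative is the linear map with matrix [[0, 1], [A(x,y), B(x,y)]], where A(x,y) = p(y)·(∂q/∂x)(x,y)/q(x,y)² and B(x,y) = p(x)·(∂q/∂y)(x,y)/q(x,y)². -/

import Mathlib

open Polynomial Filter Topology

/-- The symmetric polynomial `q(x,y) = Σ_{j=1}^k a_j Σ_{i=0}^{j-1} x^i y^{j-1-i}`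
associated to a real polynomial `p(x) = Σ_{j=0}^k a_j x^j`;
it satisfies `p(x) - p(y) = (x - y) * secQ p x y`. -/
noncomputable def secQ (p : Polynomial ℝ) (x y : ℝ) : ℝ :=
  ∑ j ∈ Finset.range (p.natDegree + 1),
    p.coeff j * ∑ i ∈ Finset.range j, x ^ i * y ^ (j - 1 - i)

/-- The secant map in extended form: `G(x,y) = (y, (y·q(x,y) − p(y))/q(x,y))`. -/
noncomputable def secG (p : Polynomial ℝ) (z : ℝ × ℝ) : ℝ × ℝ :=
  (z.2, (z.2 * secQ p z.1 z.2 - Polynomial.eval z.2 p) / secQ p z.1 z.2)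

lemma secQ_diff (p : Polynomial ℝ) :
    Differentiable ℝ (fun z : ℝ × ℝ => secQ p z.1 z.2) := by
  unfold secQ
  apply Differentiable.fun_sum
  intro j _
  apply Differentiable.const_mul
  apply Differentiable.fun_sum
  intro i _
  exact (differentiable_fst.pow i).mul (differentiable_snd.pow _)

lemma secQ_key (p : Polynomial ℝ) (x y : ℝ) :
    (x - y) * secQ p x y = p.eval x - p.eval y := by
  rw [Polynomial.eval_eq_sum_range, Polynomial.eval_eq_sum_range, ← Finset.sum_sub_distrib]
  unfold secQ
  rw [Finset.mul_sum]
  apply Finset.sum_congr rfl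
  intro j _
  rw [← mul_sub]
  rw [mul_comm (x - y), mul_assoc, geom_sum₂_mul]

theorem secant_map_fderiv (p : Polynomial ℝ) (hp : 2 ≤ p.natDegree) (x y : ℝ)
    (hq : secQ p x y ≠ 0) :
    HasFDerivAt (secG p)
      ((ContinuousLinearMap.snd ℝ ℝ ℝ).prod
        ((p.eval y * deriv (fun t => secQ p t y) x / (secQ p x y) ^ 2) •
            ContinuousLinearMap.fst ℝ ℝ ℝ +
          (p.eval x * deriv (fun t => secQ p x t) y / (secQ p x y) ^ 2) •
            ContinuousLinearMap.snd ℝ ℝ ℝ))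
      (x, y) := by
  set Qf : ℝ × ℝ → ℝ := fun z => secQ p z.1 z.2 with hQf
  set L : ℝ × ℝ →L[ℝ] ℝ := fderiv ℝ Qf (x, y) with hLdef
  have hL : HasFDerivAt Qf L (x, y) := (secQ_diff p (x, y)).hasFDerivAt
  set q := secQ p x y with hqdef
  -- partial derivatives
  have h1 : HasDerivAt (fun t => secQ p t y) (L (1, 0)) x := by
    have := hL.comp_hasDerivAt x ((hasDerivAt_id x).prodMk (hasDerivAt_const x y))
    exact this
  have h2 : HasDerivAt (fun t => secQ p x t) (L (0, 1)) y := by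
    have := hL.comp_hasDerivAt y ((hasDerivAt_const y x).prodMk (hasDerivAt_id y))
    exact this
  set qx := deriv (fun t => secQ p t y) x with hqx
  set qy := deriv (fun t => secQ p x t) y with hqy
  have hqx' : qx = L (1, 0) := h1.deriv
  have hqy' : qy = L (0, 1) := h2.deriv
  -- derivative of p at y
  have hpy : HasDerivAt (fun t => Polynomial.eval t p) (Polynomial.eval y p.derivative) y :=
    p.hasDerivAt y
  -- key identity relating qy and p'
  have hkey : q - (x - y) * qy = Polynomial.eval y p.derivative := by
    have hg : HasDerivAt (fun t => (x - t) * secQ p x t)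
        ((-1) * q + (x - y) * qy) y := by
      exact (((hasDerivAt_id y).const_sub x).mul (hqy' ▸ h2))
    have hg2 : (fun t => (x - t) * secQ p x t) =
        fun t => Polynomial.eval x p - Polynomial.eval t p := by
      funext t; exact secQ_key p x t
    rw [hg2] at hg
    have hg3 : HasDerivAt (fun t => Polynomial.eval x p - Polynomial.eval t p)
        (-(Polynomial.eval y p.derivative)) y := hpy.const_sub _
    have := hg.unique hg3
    linarith
  have hpx : Polynomial.eval x p = Polynomial.eval y p + (x - y) * q := by
    have := secQ_key p x y
    linarith
  -- derivative of the second component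
  have hN : HasFDerivAt (fun z : ℝ × ℝ => z.2 * Qf z - Polynomial.eval z.2 p)
      ((y • L + Qf (x, y) • ContinuousLinearMap.snd ℝ ℝ ℝ) -
        (Polynomial.eval y p.derivative) • ContinuousLinearMap.snd ℝ ℝ ℝ) (x, y) := by
    have hmul := (hasFDerivAt_snd (𝕜 := ℝ) (E := ℝ) (F := ℝ) (p := (x, y))).mul hL
    have hcomp := hpy.comp_hasFDerivAt (x, y)
      (hasFDerivAt_snd (𝕜 := ℝ) (E := ℝ) (F := ℝ) (p := (x, y)))
    exact hmul.sub hcomp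
  have hinv : HasFDerivAt (fun z : ℝ × ℝ => (Qf z)⁻¹) ((-(q ^ 2)⁻¹) • L) (x, y) := by
    have := (hasDerivAt_inv (x := q) hq).comp_hasFDerivAt (x, y) hL
    exact this
  have hdiv : HasFDerivAt
      (fun z : ℝ × ℝ => (z.2 * Qf z - Polynomial.eval z.2 p) / Qf z)
      ((y * q - Polynomial.eval y p) • ((-(q ^ 2)⁻¹) • L) +
        q⁻¹ • ((y • L + Qf (x, y) • ContinuousLinearMap.snd ℝ ℝ ℝ) -
          (Polynomial.eval y p.derivative) • ContinuousLinearMap.snd ℝ ℝ ℝ)) (x, y) := by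
    have := hN.mul hinv
    simp only [div_eq_mul_inv]
    exact this
  have hfst : HasFDerivAt (fun z : ℝ × ℝ => z.2)
      (ContinuousLinearMap.snd ℝ ℝ ℝ) (x, y) := hasFDerivAt_snd
  have hG := hfst.prodMk hdiv
  have hQfxy : Qf (x, y) = q := rfl
  refine hG.congr_fderiv ?_
  congr 1
  ext
  · simp only [ContinuousLinearMap.add_apply, ContinuousLinearMap.smul_apply,
      ContinuousLinearMap.coe_fst', ContinuousLinearMap.coe_snd',
      ContinuousLinearMap.sub_apply, ContinuousLinearMap.neg_apply, smul_eq_mul, hQfxy,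
      ContinuousLinearMap.comp_apply, ContinuousLinearMap.inl_apply,
      ContinuousLinearMap.inr_apply]
    rw [show ((1:ℝ),(0:ℝ)) = ((1:ℝ),(0:ℝ)) from rfl, ← hqx']
    field_simp
    ring
  · simp only [ContinuousLinearMap.add_apply, ContinuousLinearMap.smul_apply,
      ContinuousLinearMap.coe_fst', ContinuousLinearMap.coe_snd',
      ContinuousLinearMap.sub_apply, ContinuousLinearMap.neg_apply, smul_eq_mul, hQfxy,
      ContinuousLinearMap.comp_apply, ContinuousLinearMap.inl_apply,
      ContinuousLinearMap.inr_apply]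
    rw [← hqy', hpx, ← hkey]
    field_simp
    ring
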